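/- arXiv:1105.4592 — 3 statements merged into one kernel-verified Lean document; each statement's English description precedes it below -/
import Mathlib

section
/- Let 0 < α < 1, T > 0, and let v : [0,T] → ℝ be absolutely continuous on [0,T]. Then for every t ∈ (0,T], v(t) · ∂_{0t}^α v(t) ≥ (1/2) ∂_{0t}^α (v²)(t), i.e. v(t) · (1/Γ(1−α)) ∫_0^t v′(τ)(t−τ)^{−α} dτ ≥ (1/2Γ(1−α)) ∫_0^t (v²)′(τ)(t−τ)^{−α} dτ. -/
open MeasureTheory Set

/-- The Caputo fractional derivative of order `α`, `0 < α < 1`, of `v` at `t`: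
`∂_{0t}^α v(t) = (1/Γ(1-α)) ∫_0^t v'(τ) (t-τ)^(-α) dτ`. -/
noncomputable def caputo (α : ℝ) (v : ℝ → ℝ) (t : ℝ) : ℝ :=
  (1 / Real.Gamma (1 - α)) * ∫ τ in (0:ℝ)..t, deriv v τ * (t - τ) ^ (-α)

/-- `v` is absolutely continuous on `[a,b]`: its derivative is integrable and the
fundamental theorem of calculus holds. -/
def AbsContinuousOn (v : ℝ → ℝ) (a b : ℝ) : Prop :=
  IntervalIntegrable (deriv v) MeasureTheory.volume a b ∧
  ∀ t ∈ Set.Icc a b, v t = v a + ∫ τ in a..t, deriv v τ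

section Auxiliary

lemma inner_int_eq {f g : ℝ → ℝ} {u t : ℝ} (x : ℝ) (hx : x ∈ Ioc u t) :
    (∫ y in Ioc u t, (if x < y then f x * g y else 0)) = f x * ∫ s in Ioc x t, g s := by
  have hind : (fun y => if x < y then f x * g y else 0)
      = (Ioi x).indicator (fun y => f x * g y) := by
    ext y; by_cases h : x < y <;> simp [Set.indicator, h]
  rw [hind, setIntegral_indicator measurableSet_Ioi]
  have hset : Ioc u t ∩ Ioi x = Ioc x t := by
    ext y; constructor
    · rintro ⟨⟨_, h2⟩, h3⟩; exact ⟨h3, h2⟩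
    · rintro ⟨h1', h2⟩; exact ⟨⟨lt_trans hx.1 h1', h2⟩, h1'⟩
  rw [hset, MeasureTheory.integral_const_mul]

lemma inner_int_eq' {f g : ℝ → ℝ} {u t : ℝ} (y : ℝ) (hy : y ∈ Ioc u t) :
    (∫ x in Ioc u t, (if x < y then f x * g y else 0)) = g y * ∫ s in Ioc u y, f s := by
  have hind : (fun x => if x < y then f x * g y else 0)
      = (Iio y).indicator (fun x => g y * f x) := by
    ext x; by_cases h : x < y <;> simp [Set.indicator, h, mul_comm]
  rw [hind, setIntegral_indicator measurableSet_Iio]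
  have hset : Ioc u t ∩ Iio y = Ioo u y := by
    ext x; constructor
    · rintro ⟨⟨h1', _⟩, h3⟩; exact ⟨h1', h3⟩
    · rintro ⟨h1', h2⟩; exact ⟨⟨h1', le_trans h2.le hy.2⟩, h2⟩
  rw [hset, MeasureTheory.integral_const_mul, ← integral_Ioc_eq_integral_Ioo]

lemma sq_integral_aux {f : ℝ → ℝ} (hfm : Measurable f) {u t : ℝ}
    (hf : IntegrableOn f (Ioc u t)) :
    ∫ τ in Ioc u t, f τ * ∫ s in Ioc τ t, f s = (∫ s in Ioc u t, f s) ^ 2 / 2 := by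
  have hΦm : Measurable (fun p : ℝ × ℝ => if p.1 < p.2 then f p.1 * f p.2 else 0) := by
    apply Measurable.ite (measurableSet_lt measurable_fst measurable_snd)
    · exact (hfm.comp measurable_fst).mul (hfm.comp measurable_snd)
    · exact measurable_const
  have hΦint : Integrable (fun p : ℝ × ℝ => if p.1 < p.2 then f p.1 * f p.2 else 0)
      ((volume.restrict (Ioc u t)).prod (volume.restrict (Ioc u t))) := by
    refine (hf.abs.mul_prod hf.abs).mono' hΦm.aestronglyMeasurable ?_
    refine Filter.Eventually.of_forall (fun p => ?_)
    simp only [Real.norm_eq_abs]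
    split_ifs
    · rw [abs_mul]
    · simp only [abs_zero]; positivity
  have hswap := MeasureTheory.integral_integral_swap
    (f := fun x y => if x < y then f x * f y else 0) hΦint
  have h1 : (∫ x in Ioc u t, (∫ y in Ioc u t, (if x < y then f x * f y else 0)))
      = ∫ x in Ioc u t, f x * ∫ s in Ioc x t, f s :=
    setIntegral_congr_fun measurableSet_Ioc (fun x hx => inner_int_eq x hx)
  have h2 : (∫ y in Ioc u t, (∫ x in Ioc u t, (if x < y then f x * f y else 0)))
      = ∫ y in Ioc u t, f y * ∫ s in Ioc u y, f s :=
    setIntegral_congr_fun measurableSet_Ioc (fun y hy => inner_int_eq' y hy)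
  have hi1 : IntegrableOn (fun x => f x * ∫ s in Ioc x t, f s) (Ioc u t) := by
    refine (hΦint.integral_prod_left).congr ?_
    exact (ae_restrict_iff' measurableSet_Ioc).mpr
      (Filter.Eventually.of_forall (fun x hx => inner_int_eq x hx))
  have hi2 : IntegrableOn (fun y => f y * ∫ s in Ioc u y, f s) (Ioc u t) := by
    refine (hΦint.integral_prod_right).congr ?_
    exact (ae_restrict_iff' measurableSet_Ioc).mpr
      (Filter.Eventually.of_forall (fun y hy => inner_int_eq' y hy))
  have hsum : (∫ x in Ioc u t, f x * ∫ s in Ioc x t, f s)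
      + (∫ y in Ioc u t, f y * ∫ s in Ioc u y, f s) = (∫ s in Ioc u t, f s) ^ 2 := by
    rw [← integral_add hi1 hi2]
    have heq : ∫ x in Ioc u t, ((f x * ∫ s in Ioc x t, f s) + f x * ∫ s in Ioc u x, f s)
        = ∫ x in Ioc u t, f x * ∫ s in Ioc u t, f s := by
      refine setIntegral_congr_fun measurableSet_Ioc (fun x hx => ?_)
      have hsplit : (∫ s in Ioc u x, f s) + ∫ s in Ioc x t, f s = ∫ s in Ioc u t, f s := by
        rw [← setIntegral_union ((Set.Ioc_disjoint_Ioc_of_le le_rfl)) measurableSet_Ioc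
          (hf.mono_set (Set.Ioc_subset_Ioc_right hx.2))
          (hf.mono_set (Set.Ioc_subset_Ioc_left hx.1.le)),
          Set.Ioc_union_Ioc_eq_Ioc hx.1.le hx.2]
      rw [← mul_add, add_comm (∫ s in Ioc x t, f s), hsplit]
    rw [heq, MeasureTheory.integral_mul_const, sq]
  rw [h1] at hswap
  rw [h2] at hswap
  linarith [hsum, hswap]

lemma rpow_decomp {a t : ℝ} {τ : ℝ} (hτ0 : 0 ≤ τ) (hτt : τ < t) :
    (t - τ) ^ (-a) = t ^ (-a) + ∫ u in Ioc 0 τ, a * (t - u) ^ (-a - 1) := by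
  have key : ∫ u in (0:ℝ)..τ, a * (t - u) ^ (-a - 1)
      = (t - τ) ^ (-a) - (t - 0) ^ (-a) := by
    refine intervalIntegral.integral_eq_sub_of_hasDerivAt
      (f := fun u => (t - u) ^ (-a)) (fun u hu => ?_) ?_
    · have hu' : u ∈ Icc 0 τ := by rwa [Set.uIcc_of_le hτ0] at hu
      have htu : 0 < t - u := by have := hu'.2; linarith [hτt]
      have h1 : HasDerivAt (fun u : ℝ => t - u) (-1) u := (hasDerivAt_id u).const_sub t
      have h2 : HasDerivAt (fun y : ℝ => y ^ (-a)) (-a * (t - u) ^ (-a - 1)) (t - u) :=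
        Real.hasDerivAt_rpow_const (Or.inl (ne_of_gt htu))
      have := h2.comp u h1
      rw [show a * (t - u) ^ (-a - 1) = -a * (t - u) ^ (-a - 1) * -1 by ring]
      exact this
    · apply ContinuousOn.intervalIntegrable
      apply ContinuousOn.mul continuousOn_const
      apply ContinuousOn.rpow_const ((continuous_const.sub continuous_id).continuousOn)
      intro x hx
      left
      have hx' : x ∈ Icc 0 τ := by rwa [Set.uIcc_of_le hτ0] at hx
      have : 0 < t - x := by have := hx'.2; linarith [hτt]
      exact ne_of_gt this
  rw [intervalIntegral.integral_of_le hτ0] at key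
  rw [key, sub_zero]
  ring

lemma ae_mem_Ioo {t : ℝ} :
    ∀ᵐ τ ∂(volume.restrict (Ioc (0:ℝ) t)), τ ∈ Ioo (0:ℝ) t := by
  have h1 := ae_restrict_mem (μ := volume) (measurableSet_Ioc (a := (0:ℝ)) (b := t))
  have h2 : ∀ᵐ (x : ℝ), x ≠ t := by
    have h3 : volume ({t} : Set ℝ) = 0 := measure_singleton t
    have := measure_eq_zero_iff_ae_notMem.mp h3
    filter_upwards [this] with x hx
    simpa using hx
  filter_upwards [h1, ae_restrict_of_ae h2] with τ hτ hne
  exact ⟨hτ.1, lt_of_le_of_ne hτ.2 hne⟩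

lemma weight_swap {a t : ℝ} (ha0 : 0 < a) (ht : 0 < t)
    {φ : ℝ → ℝ} (hφm : AEStronglyMeasurable φ (volume.restrict (Ioc 0 t)))
    (hφI : IntegrableOn (fun τ => φ τ * (t - τ) ^ (-a)) (Ioc 0 t)) :
    ∫ τ in Ioc 0 t, φ τ * (t - τ) ^ (-a)
      = t ^ (-a) * (∫ τ in Ioc 0 t, φ τ)
        + ∫ u in Ioc 0 t, (a * (t - u) ^ (-a - 1)) * ∫ τ in Ioc u t, φ τ := by
  set w : ℝ → ℝ := fun u => a * (t - u) ^ (-a - 1) with hw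
  have hwm : Measurable w := by
    have : Continuous (fun u : ℝ => t - u) := continuous_const.sub continuous_id
    fun_prop
  have hw_nonneg : ∀ u, u ≤ t → 0 ≤ w u := fun u hu =>
    mul_nonneg ha0.le (Real.rpow_nonneg (by linarith) _)
  have hφint : IntegrableOn φ (Ioc 0 t) := by
    refine ((hφI.abs.const_mul (t ^ a))).mono' hφm ?_
    filter_upwards [ae_mem_Ioo] with τ hτ
    have h1 : (t:ℝ) ^ (-a) ≤ (t - τ) ^ (-a) :=
      Real.rpow_le_rpow_of_nonpos (by linarith [hτ.2]) (by linarith [hτ.1]) (by linarith)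
    have e1 : |φ τ * (t - τ) ^ (-a)| = |φ τ| * (t - τ) ^ (-a) := by
      rw [abs_mul, abs_of_nonneg (Real.rpow_nonneg (by linarith [hτ.2]) _)]
    have e2 : (0:ℝ) < t ^ a := Real.rpow_pos_of_pos ht a
    have e3 : t ^ (-a) * t ^ a = 1 := by
      rw [← Real.rpow_add ht]; simp
    rw [Real.norm_eq_abs, e1]
    have h4 := mul_le_mul_of_nonneg_left h1 (abs_nonneg (φ τ))
    nlinarith [abs_nonneg (φ τ)]
  have hw_int : ∀ τ, τ < t → IntegrableOn w (Ioc 0 τ) := by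
    intro τ hτ
    rcases le_or_gt τ 0 with h | h
    · rw [Set.Ioc_eq_empty (by exact fun hc => absurd hc (not_lt.mpr h))]
      simp [integrableOn_empty]
    · refine (ContinuousOn.integrableOn_Icc ?_).mono_set Set.Ioc_subset_Icc_self
      apply ContinuousOn.mul continuousOn_const
      apply ContinuousOn.rpow_const ((continuous_const.sub continuous_id).continuousOn)
      intro x hx
      left
      have : 0 < t - x := by have := hx.2; linarith
      exact ne_of_gt this
  set Ψ : ℝ × ℝ → ℝ := fun p => if p.1 < p.2 then w p.1 * φ p.2 else 0 with hΨ
  set μ := volume.restrict (Ioc (0:ℝ) t) with hμ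
  have hΨm : AEStronglyMeasurable Ψ (μ.prod μ) := by
    have hSm : MeasurableSet {p : ℝ × ℝ | p.1 < p.2} :=
      measurableSet_lt measurable_fst measurable_snd
    have hbase : AEStronglyMeasurable (fun p : ℝ × ℝ => w p.1 * φ p.2) (μ.prod μ) :=
      ((hwm.comp measurable_fst).aestronglyMeasurable).mul hφm.comp_snd
    have : Ψ = {p : ℝ × ℝ | p.1 < p.2}.indicator (fun p => w p.1 * φ p.2) := by
      ext p; by_cases h : p.1 < p.2 <;> simp [hΨ, Set.indicator, h]
    rw [this]
    exact hbase.indicator hSm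
  have hΨint : Integrable Ψ (μ.prod μ) := by
    rw [integrable_prod_iff' hΨm]
    constructor
    · filter_upwards [ae_mem_Ioo] with τ hτ
      have : (fun u => Ψ (u, τ)) = (Iio τ).indicator (fun u => w u * φ τ) := by
        ext u; by_cases h : u < τ <;> simp [hΨ, Set.indicator, h]
      rw [this, hμ, integrable_indicator_iff measurableSet_Iio]
      rw [IntegrableOn, Measure.restrict_restrict measurableSet_Iio]
      have hsub : Iio τ ∩ Ioc 0 t ⊆ Ioc 0 τ := by
        rintro x ⟨h1, h2, _⟩; exact ⟨h2, le_of_lt h1⟩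
      exact MeasureTheory.IntegrableOn.mono_set ((hw_int τ hτ.2).mul_const (φ τ)) hsub
    · have hmeas : AEStronglyMeasurable (fun τ => ∫ u, ‖Ψ (u, τ)‖ ∂μ) μ :=
        (hΨm.norm.prod_swap).integral_prod_right'
      refine (hφI.abs).mono' hmeas ?_
      filter_upwards [ae_mem_Ioo] with τ hτ
      have hcomp : (∫ u, ‖Ψ (u, τ)‖ ∂μ) = |φ τ| * ∫ u in Ioc 0 τ, |w u| := by
        have : (fun u => ‖Ψ (u, τ)‖) = fun u => if u < τ then |w u| * |φ τ| else 0 := by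
          ext u; by_cases h : u < τ <;> simp [hΨ, h, abs_mul]
        rw [hμ]
        show (∫ u in Ioc 0 t, ‖Ψ (u, τ)‖) = _
        rw [show (fun u => ‖Ψ (u, τ)‖) = fun u => if u < τ then |w u| * |φ τ| else 0 from this]
        exact inner_int_eq' (f := fun u => |w u|) (g := fun τ => |φ τ|) τ ⟨hτ.1, hτ.2.le⟩
      rw [hcomp]
      have habs : ∫ u in Ioc 0 τ, |w u| = ∫ u in Ioc 0 τ, w u := by
        refine setIntegral_congr_fun measurableSet_Ioc (fun u hu => ?_)
        exact abs_of_nonneg (hw_nonneg u (le_trans hu.2 hτ.2.le))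
      have hWval : ∫ u in Ioc 0 τ, w u = (t - τ) ^ (-a) - t ^ (-a) := by
        have := rpow_decomp (a := a) hτ.1.le hτ.2
        linarith [this]
      rw [habs, hWval, Real.norm_eq_abs]
      have h0 : (0:ℝ) ≤ t ^ (-a) := Real.rpow_nonneg ht.le _
      have h1 : (0:ℝ) ≤ (t - τ) ^ (-a) - t ^ (-a) := by
        have := Real.rpow_le_rpow_of_nonpos (x := t - τ) (y := t)
          (by linarith [hτ.2]) (by linarith [hτ.1]) (by linarith : -a ≤ 0)
        linarith
      rw [abs_of_nonneg (mul_nonneg (abs_nonneg _) h1), abs_mul,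
        abs_of_nonneg (Real.rpow_nonneg (by linarith [hτ.2] : (0:ℝ) ≤ t - τ) _)]
      nlinarith [abs_nonneg (φ τ)]
  have hswap := MeasureTheory.integral_integral_swap (f := fun u τ => Ψ (u, τ)) hΨint
  have hleft : (∫ u, (∫ τ, Ψ (u, τ) ∂μ) ∂μ)
      = ∫ u in Ioc 0 t, w u * ∫ τ in Ioc u t, φ τ :=
    setIntegral_congr_fun measurableSet_Ioc (fun u hu => inner_int_eq u hu)
  have hright : (∫ τ, (∫ u, Ψ (u, τ) ∂μ) ∂μ)
      = ∫ τ in Ioc 0 t, φ τ * ∫ u in Ioc 0 τ, w u :=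
    setIntegral_congr_fun measurableSet_Ioc (fun τ hτ => inner_int_eq' τ hτ)
  rw [hleft, hright] at hswap
  have hφW : IntegrableOn (fun τ => φ τ * ∫ u in Ioc 0 τ, w u) (Ioc 0 t) := by
    refine (hφI.sub (hφint.const_mul (t ^ (-a)))).congr ?_
    filter_upwards [ae_mem_Ioo] with τ hτ
    have := rpow_decomp (a := a) hτ.1.le hτ.2
    have hWval : ∫ u in Ioc 0 τ, w u = (t - τ) ^ (-a) - t ^ (-a) := by linarith
    simp only [Pi.sub_apply]
    rw [hWval]; ring
  have hmain : ∫ τ in Ioc 0 t, φ τ * (t - τ) ^ (-a)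
      = ∫ τ in Ioc 0 t, (t ^ (-a) * φ τ + φ τ * ∫ u in Ioc 0 τ, w u) := by
    refine integral_congr_ae ?_
    filter_upwards [ae_mem_Ioo] with τ hτ
    have := rpow_decomp (a := a) hτ.1.le hτ.2
    have hWval : ∫ u in Ioc 0 τ, w u = (t - τ) ^ (-a) - t ^ (-a) := by linarith
    rw [hWval]; ring
  rw [hmain, integral_add (hφint.const_mul (t ^ (-a))) hφW,
    MeasureTheory.integral_const_mul, hswap]

lemma G_continuousOn {f : ℝ → ℝ} {t : ℝ} (hf : IntegrableOn f (Ioc 0 t)) :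
    ContinuousOn (fun x => ∫ s in Ioc x t, f s) (Icc 0 t) := by
  have hIcc : IntegrableOn f (Icc 0 t) := by
    rwa [integrableOn_Icc_iff_integrableOn_Ioc]
  have hP := intervalIntegral.continuousOn_primitive (a := (0:ℝ)) (b := t) hIcc
  refine ContinuousOn.congr (f := fun x => (∫ s in Ioc 0 t, f s) - ∫ s in Ioc 0 x, f s)
    (continuousOn_const.sub hP) ?_
  intro x hx
  have hsplit : (∫ s in Ioc 0 x, f s) + ∫ s in Ioc x t, f s = ∫ s in Ioc 0 t, f s := by
    rw [← setIntegral_union ((Set.Ioc_disjoint_Ioc_of_le le_rfl)) measurableSet_Ioc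
      (hf.mono_set (Set.Ioc_subset_Ioc_right hx.2))
      (hf.mono_set (Set.Ioc_subset_Ioc_left hx.1)),
      Set.Ioc_union_Ioc_eq_Ioc hx.1 hx.2]
  simp only
  linarith

lemma key_nonneg {a t : ℝ} (ha0 : 0 < a) (ht : 0 < t)
    {f : ℝ → ℝ} (hfm : Measurable f) (hf : IntegrableOn f (Ioc 0 t))
    (hint : IntegrableOn
      (fun τ => (f τ * ∫ s in Ioc τ t, f s) * (t - τ) ^ (-a)) (Ioc 0 t)) :
    0 ≤ ∫ τ in Ioc 0 t, (f τ * ∫ s in Ioc τ t, f s) * (t - τ) ^ (-a) := by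
  have hφm : AEStronglyMeasurable (fun τ => f τ * ∫ s in Ioc τ t, f s)
      (volume.restrict (Ioc 0 t)) := by
    refine (hfm.aestronglyMeasurable.restrict).mul ?_
    exact ((G_continuousOn hf).aestronglyMeasurable measurableSet_Icc).mono_measure
      (Measure.restrict_mono Set.Ioc_subset_Icc_self le_rfl)
  rw [weight_swap ha0 ht hφm hint]
  have h1 : (0:ℝ) ≤ t ^ (-a) * ∫ τ in Ioc 0 t, f τ * ∫ s in Ioc τ t, f s := by
    rw [sq_integral_aux hfm hf]
    positivity
  have h2 : (0:ℝ) ≤ ∫ u in Ioc 0 t,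
      (a * (t - u) ^ (-a - 1)) * ∫ τ in Ioc u t, f τ * ∫ s in Ioc τ t, f s := by
    refine setIntegral_nonneg measurableSet_Ioc (fun u hu => ?_)
    rw [sq_integral_aux hfm (hf.mono_set (Set.Ioc_subset_Ioc_left hu.1.le))]
    have : (0:ℝ) ≤ a * (t - u) ^ (-a - 1) :=
      mul_nonneg ha0.le (Real.rpow_nonneg (by linarith [hu.2]) _)
    positivity
  linarith

lemma deriv_sq_ae {v : ℝ → ℝ} {T t : ℝ} (htT : t ≤ T)
    (hfT : IntegrableOn (deriv v) (Ioc 0 T))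
    (hrepr : ∀ x ∈ Set.Icc (0:ℝ) T, v x = v 0 + ∫ s in Ioc 0 x, deriv v s) :
    (deriv (fun s => v s ^ 2)) =ᵐ[volume.restrict (Ioc 0 t)]
      (fun τ => 2 * v τ * deriv v τ) := by
  set f := deriv v with hf
  set g₁ : ℝ → ℝ := fun s => (|f s| + f s) / 2 with hg₁
  set g₂ : ℝ → ℝ := fun s => (|f s| - f s) / 2 with hg₂
  have hg₁i : IntegrableOn g₁ (Ioc 0 T) := (hfT.abs.add hfT).div_const 2
  have hg₂i : IntegrableOn g₂ (Ioc 0 T) := (hfT.abs.sub hfT).div_const 2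
  set p : ℝ → ℝ := fun x => ∫ s in Ioc 0 x, g₁ s with hp
  set q : ℝ → ℝ := fun x => ∫ s in Ioc 0 x, g₂ s with hq
  have hmono : ∀ (g : ℝ → ℝ), IntegrableOn g (Ioc 0 T) → (∀ s, 0 ≤ g s) →
      MonotoneOn (fun x => ∫ s in Ioc 0 x, g s) (Icc 0 T) := by
    intro g hgi hgpos x hx y hy hxy
    have hsplit : (∫ s in Ioc 0 x, g s) + ∫ s in Ioc x y, g s = ∫ s in Ioc 0 y, g s := by
      rw [← setIntegral_union ((Set.Ioc_disjoint_Ioc_of_le le_rfl)) measurableSet_Ioc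
        (hgi.mono_set (Set.Ioc_subset_Ioc_right (le_trans hxy hy.2)))
        (hgi.mono_set (Set.Ioc_subset_Ioc (hx.1) hy.2)),
        Set.Ioc_union_Ioc_eq_Ioc hx.1 hxy]
    have hnn : 0 ≤ ∫ s in Ioc x y, g s :=
      setIntegral_nonneg measurableSet_Ioc (fun s _ => hgpos s)
    simp only
    linarith
  have hpm : MonotoneOn p (Icc 0 T) :=
    hmono g₁ hg₁i (fun s => by have := neg_abs_le (f s); simp only [hg₁]; linarith)
  have hqm : MonotoneOn q (Icc 0 T) := by
    refine hmono g₂ hg₂i (fun s => ?_)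
    simp only [hg₂]
    linarith [le_abs_self (f s)]
  have hpd := (hpm.locallyBoundedVariationOn).ae_differentiableWithinAt_of_mem_real
  have hqd := (hqm.locallyBoundedVariationOn).ae_differentiableWithinAt_of_mem_real
  have hveq : ∀ x ∈ Icc (0:ℝ) T, v x = v 0 + p x - q x := by
    intro x hx
    have : p x - q x = ∫ s in Ioc 0 x, f s := by
      rw [hp, hq]
      simp only
      rw [← integral_sub (hg₁i.mono_set (Set.Ioc_subset_Ioc_right hx.2))
        (hg₂i.mono_set (Set.Ioc_subset_Ioc_right hx.2))]
      refine setIntegral_congr_fun measurableSet_Ioc (fun s _ => ?_)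
      simp only [hg₁, hg₂]
      ring
    rw [hrepr x hx]
    linarith
  have hne : ∀ᵐ (x : ℝ), x ≠ t := by
    have h3 : volume ({t} : Set ℝ) = 0 := measure_singleton t
    filter_upwards [measure_eq_zero_iff_ae_notMem.mp h3] with x hx
    simpa using hx
  rw [Filter.EventuallyEq]
  rw [ae_restrict_iff' measurableSet_Ioc]
  filter_upwards [hpd, hqd, hne] with x hpd' hqd' hne' hx
  have hxt : x < t := lt_of_le_of_ne hx.2 hne'
  have hxT : x ∈ Ioo (0:ℝ) T := ⟨hx.1, lt_of_lt_of_le hxt htT⟩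
  have hxIcc : x ∈ Icc (0:ℝ) T := ⟨hx.1.le, hxT.2.le⟩
  have hdw : DifferentiableWithinAt ℝ v (Icc 0 T) x := by
    have h0 : DifferentiableWithinAt ℝ (fun y => v 0 + p y - q y) (Icc 0 T) x :=
      ((differentiableWithinAt_const _).add (hpd' hxIcc)).sub (hqd' hxIcc)
    exact h0.congr (fun y hy => hveq y hy) (hveq x hxIcc)
  have hda : DifferentiableAt ℝ v x := hdw.differentiableAt (Icc_mem_nhds hxT.1 hxT.2)
  have h2 : HasDerivAt (fun s => v s ^ 2) (2 * v x ^ 1 * deriv v x) x := by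
    have := (hasDerivAt_pow 2 (v x)).comp x hda.hasDerivAt
    simpa [Function.comp_def] using this
  rw [h2.deriv, pow_one]

end Auxiliary

/-- Lemma 1: for any absolutely continuous `v` on `[0,T]` and `0 < α < 1`,
`v(t) ∂_{0t}^α v(t) ≥ (1/2) ∂_{0t}^α (v²)(t)` for all `t ∈ (0,T]`. -/
theorem caputo_mul_self_ge_half_caputo_sq
    (α T : ℝ) (hα0 : 0 < α) (hα1 : α < 1) (hT : 0 < T)
    (v : ℝ → ℝ) (hv : AbsContinuousOn v 0 T) :
    ∀ t ∈ Set.Ioc (0:ℝ) T,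
      v t * caputo α v t ≥ (1 / 2) * caputo α (fun s => (v s) ^ 2) t := by
  intro t ht
  obtain ⟨ht0, htT⟩ := ht
  set f := deriv v with hfdef
  have hfm : Measurable f := measurable_deriv v
  have hfT : IntegrableOn f (Ioc 0 T) :=
    (intervalIntegrable_iff_integrableOn_Ioc_of_le hT.le).mp hv.1
  have hfi : IntegrableOn f (Ioc 0 t) := hfT.mono_set (Set.Ioc_subset_Ioc_right htT)
  have hrepr : ∀ x ∈ Set.Icc (0:ℝ) T, v x = v 0 + ∫ s in Ioc 0 x, f s := by
    intro x hx
    rw [hv.2 x hx, intervalIntegral.integral_of_le hx.1]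
  have hreprt : ∀ x ∈ Set.Icc (0:ℝ) t, v x = v 0 + ∫ s in Ioc 0 x, f s :=
    fun x hx => hrepr x ⟨hx.1, le_trans hx.2 htT⟩
  have hΓ : 0 < Real.Gamma (1 - α) := Real.Gamma_pos_of_pos (by linarith)
  have hvcont : ContinuousOn v (Icc 0 t) := by
    have hIcc : IntegrableOn f (Icc 0 t) := by rwa [integrableOn_Icc_iff_integrableOn_Ioc]
    have hP := intervalIntegral.continuousOn_primitive (a := (0:ℝ)) (b := t) hIcc
    refine ContinuousOn.congr (f := fun x => v 0 + ∫ s in Ioc 0 x, f s)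
      (continuousOn_const.add hP) ?_
    intro x hx; exact hreprt x hx
  obtain ⟨M, hM⟩ :=
    (isCompact_Icc (a := (0:ℝ)) (b := t)).exists_bound_of_continuousOn hvcont
  have hae := deriv_sq_ae htT hfT hrepr
  have hGv : ∀ u ∈ Icc (0:ℝ) t, (∫ s in Ioc u t, f s) = v t - v u := by
    intro u hu
    have hsplit : (∫ s in Ioc 0 u, f s) + ∫ s in Ioc u t, f s = ∫ s in Ioc 0 t, f s := by
      rw [← setIntegral_union (Set.Ioc_disjoint_Ioc_of_le le_rfl) measurableSet_Ioc
        (hfi.mono_set (Set.Ioc_subset_Ioc_right hu.2))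
        (hfi.mono_set (Set.Ioc_subset_Ioc_left hu.1)),
        Set.Ioc_union_Ioc_eq_Ioc hu.1 hu.2]
    have h1 := hreprt u hu
    have h2 := hreprt t ⟨ht0.le, le_refl t⟩
    linarith
  have hcv : caputo α v t
      = (1 / Real.Gamma (1 - α)) * ∫ τ in Ioc 0 t, f τ * (t - τ) ^ (-α) := by
    rw [caputo, intervalIntegral.integral_of_le ht0.le]
  have hcsq : caputo α (fun s => v s ^ 2) t
      = (1 / Real.Gamma (1 - α)) *
        ∫ τ in Ioc 0 t, deriv (fun s => v s ^ 2) τ * (t - τ) ^ (-α) := by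
    rw [caputo, intervalIntegral.integral_of_le ht0.le]
  have haeI : (fun τ => deriv (fun s => v s ^ 2) τ * (t - τ) ^ (-α))
      =ᵐ[volume.restrict (Ioc 0 t)] (fun τ => (2 * v τ * f τ) * (t - τ) ^ (-α)) := by
    filter_upwards [hae] with τ hτ
    rw [hτ]
  have hvm : AEStronglyMeasurable v (volume.restrict (Ioc 0 t)) :=
    (hvcont.aestronglyMeasurable measurableSet_Icc).mono_measure
      (Measure.restrict_mono Set.Ioc_subset_Icc_self le_rfl)
  have hIm : Measurable (fun τ : ℝ => (t - τ) ^ (-α)) := by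
    have : Continuous (fun u : ℝ => t - u) := continuous_const.sub continuous_id
    fun_prop
  by_cases hfI : IntegrableOn (fun τ => f τ * (t - τ) ^ (-α)) (Ioc 0 t)
  · -- main case: f·I integrable
    have hvfI : IntegrableOn (fun τ => v τ * (f τ * (t - τ) ^ (-α))) (Ioc 0 t) := by
      refine (hfI.abs.const_mul M).mono' (hvm.mul hfI.aestronglyMeasurable) ?_
      filter_upwards [ae_restrict_mem measurableSet_Ioc] with τ hτ
      rw [Real.norm_eq_abs, abs_mul]
      have h1 : |v τ| ≤ M := by
        have := hM τ (Set.Ioc_subset_Icc_self hτ); rwa [Real.norm_eq_abs] at this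
      have h2 : (0:ℝ) ≤ |f τ * (t - τ) ^ (-α)| := abs_nonneg _
      nlinarith
    have hGint : IntegrableOn
        (fun τ => (f τ * ∫ s in Ioc τ t, f s) * (t - τ) ^ (-α)) (Ioc 0 t) := by
      refine IntegrableOn.congr_fun ((hfI.const_mul (v t)).sub hvfI)
        (fun τ hτ => ?_) measurableSet_Ioc
      simp only [Pi.sub_apply]
      rw [hGv τ (Set.Ioc_subset_Icc_self hτ)]
      ring
    have hkey := key_nonneg hα0 ht0 hfm hfi hGint
    have hsplit2 : ∫ τ in Ioc 0 t, (f τ * ∫ s in Ioc τ t, f s) * (t - τ) ^ (-α)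
        = v t * (∫ τ in Ioc 0 t, f τ * (t - τ) ^ (-α))
          - ∫ τ in Ioc 0 t, v τ * (f τ * (t - τ) ^ (-α)) := by
      rw [← MeasureTheory.integral_const_mul, ← integral_sub (hfI.const_mul (v t)) hvfI]
      refine setIntegral_congr_fun measurableSet_Ioc (fun τ hτ => ?_)
      rw [hGv τ (Set.Ioc_subset_Icc_self hτ)]
      ring
    have hsq_int : ∫ τ in Ioc 0 t, deriv (fun s => v s ^ 2) τ * (t - τ) ^ (-α)
        = 2 * ∫ τ in Ioc 0 t, v τ * (f τ * (t - τ) ^ (-α)) := by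
      rw [integral_congr_ae haeI, ← MeasureTheory.integral_const_mul]
      refine setIntegral_congr_fun measurableSet_Ioc (fun τ _ => ?_)
      ring
    rw [ge_iff_le, hcv, hcsq, hsq_int]
    have h0 : 0 < 1 / Real.Gamma (1 - α) := by positivity
    nlinarith [hkey, hsplit2, h0]
  · by_cases hvt0 : v t = 0
    · -- v(t) = 0 : left side vanishes
      rw [ge_iff_le, hcv, hcsq, hvt0, zero_mul]
      by_cases h2int : IntegrableOn
          (fun τ => deriv (fun s => v s ^ 2) τ * (t - τ) ^ (-α)) (Ioc 0 t)
      · have h2vf : IntegrableOn (fun τ => (2 * v τ * f τ) * (t - τ) ^ (-α)) (Ioc 0 t) :=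
          h2int.congr haeI
        have hGint : IntegrableOn
            (fun τ => (f τ * ∫ s in Ioc τ t, f s) * (t - τ) ^ (-α)) (Ioc 0 t) := by
          refine IntegrableOn.congr_fun (h2vf.const_mul (-(1:ℝ)/2))
            (fun τ hτ => ?_) measurableSet_Ioc
          rw [hGv τ (Set.Ioc_subset_Icc_self hτ), hvt0]
          ring
        have hkey := key_nonneg hα0 ht0 hfm hfi hGint
        have heq1 : ∫ τ in Ioc 0 t, deriv (fun s => v s ^ 2) τ * (t - τ) ^ (-α)
            = ∫ τ in Ioc 0 t, (2 * v τ * f τ) * (t - τ) ^ (-α) := integral_congr_ae haeI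
        have heq2 : ∫ τ in Ioc 0 t, (2 * v τ * f τ) * (t - τ) ^ (-α)
            = (-2) * ∫ τ in Ioc 0 t, (f τ * ∫ s in Ioc τ t, f s) * (t - τ) ^ (-α) := by
          rw [← MeasureTheory.integral_const_mul]
          refine setIntegral_congr_fun measurableSet_Ioc (fun τ hτ => ?_)
          rw [hGv τ (Set.Ioc_subset_Icc_self hτ), hvt0]
          ring
        have h0 : 0 < 1 / Real.Gamma (1 - α) := by positivity
        rw [heq1, heq2]
        nlinarith [hkey, h0]
      · rw [integral_undef h2int]
        simp
    · -- v(t) ≠ 0 and f·I not integrable : both sides vanish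
      have h2int : ¬ IntegrableOn
          (fun τ => deriv (fun s => v s ^ 2) τ * (t - τ) ^ (-α)) (Ioc 0 t) := by
        intro h2int
        have h2vf : IntegrableOn (fun τ => (2 * v τ * f τ) * (t - τ) ^ (-α)) (Ioc 0 t) :=
          h2int.congr haeI
        apply hfI
        have hcontt := hvcont t ⟨ht0.le, le_refl t⟩
        rw [Metric.continuousWithinAt_iff] at hcontt
        obtain ⟨δ, hδ0, hδ⟩ := hcontt (|v t| / 2) (by positivity)
        set s := max 0 (t - δ/2) with hs
        have hst : s < t := by
          rw [hs]; apply max_lt ht0; linarith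
        have hs0 : (0:ℝ) ≤ s := le_max_left _ _
        have h1 : IntegrableOn (fun τ => f τ * (t - τ) ^ (-α)) (Ioc 0 s) := by
          refine (((hfi.mono_set (Set.Ioc_subset_Ioc_right hst.le)).abs.const_mul
            ((t - s) ^ (-α)))).mono'
            ((hfm.aestronglyMeasurable.restrict).mul (hIm.aestronglyMeasurable.restrict)) ?_
          filter_upwards [ae_restrict_mem measurableSet_Ioc] with τ hτ
          rw [Real.norm_eq_abs, abs_mul,
            abs_of_nonneg (Real.rpow_nonneg (by linarith [hτ.2, hst] : (0:ℝ) ≤ t - τ) _)]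
          have hle : (t - τ) ^ (-α) ≤ (t - s) ^ (-α) :=
            Real.rpow_le_rpow_of_nonpos (by linarith) (by linarith [hτ.2]) (by linarith)
          have := abs_nonneg (f τ)
          nlinarith
        have h2 : IntegrableOn (fun τ => f τ * (t - τ) ^ (-α)) (Ioc s t) := by
          refine (((h2vf.mono_set (Set.Ioc_subset_Ioc_left hs0)).abs.const_mul
            (1 / |v t|))).mono'
            ((hfm.aestronglyMeasurable.restrict).mul (hIm.aestronglyMeasurable.restrict)) ?_
          filter_upwards [ae_restrict_mem measurableSet_Ioc] with τ hτ
          have hτIcc : τ ∈ Icc (0:ℝ) t := ⟨le_trans hs0 hτ.1.le, hτ.2⟩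
          have hdist : dist τ t < δ := by
            rw [Real.dist_eq, abs_of_nonpos (by linarith [hτ.2])]
            have hsge : t - δ/2 ≤ s := le_max_right _ _
            have := hτ.1
            linarith
          have hvτ := hδ hτIcc hdist
          rw [Real.dist_eq] at hvτ
          have hlow : |v t| / 2 ≤ |v τ| := by
            have h3 := abs_sub_abs_le_abs_sub (v t) (v τ)
            rw [abs_sub_comm] at hvτ
            linarith
          have hvtpos : 0 < |v t| := abs_pos.mpr hvt0
          have hI0 : (0:ℝ) ≤ (t - τ) ^ (-α) :=
            Real.rpow_nonneg (by linarith [hτ.2]) _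
          rw [Real.norm_eq_abs, abs_mul,
            abs_of_nonneg hI0]
          have e1 : |2 * v τ * f τ * (t - τ) ^ (-α)|
              = 2 * |v τ| * |f τ| * (t - τ) ^ (-α) := by
            rw [abs_mul, abs_mul, abs_mul, abs_of_nonneg hI0]
            norm_num
          rw [e1]
          rw [div_mul_eq_mul_div, le_div_iff₀ hvtpos]
          nlinarith [mul_nonneg (abs_nonneg (f τ)) hI0]
        have := h1.union h2
        rwa [Set.Ioc_union_Ioc_eq_Ioc hs0 hst.le] at this
      rw [ge_iff_le, hcv, hcsq, integral_undef hfI, integral_undef h2int]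
      simp
end

section
/- Let 0 < α < 1, l > 0, T > 0, and let u : [0,l] × [0,T] → ℝ be continuous, with ∂u/∂t continuous on [0,l] × [0,T], such that for each fixed x the function t ↦ u(x,t) is absolutely continuous on [0,T]. Then for every t ∈ (0,T], ∫_0^l u(x,t) ∂_{0t}^α u(x,t) dx ≥ (1/2) ∂_{0t}^α ( ∫_0^l u(x,t)² dx ), where the Caputo derivative on the right acts on the function t ↦ ∫_0^l u(x,t)² dx. -/
open MeasureTheory Set

section Aux
open intervalIntegral Filter Topology
open scoped Interval

lemma kint {α : ℝ} (hα1 : α < 1) (t : ℝ) :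
    IntervalIntegrable (fun τ => (t - τ) ^ (-α)) volume 0 t := by
  have h : IntervalIntegrable (fun x : ℝ => x ^ (-α)) volume (t - 0) (t - t) :=
    intervalIntegral.intervalIntegrable_rpow' (by linarith)
  simpa using h.comp_sub_left t

lemma bdd_mul_kint {α t C : ℝ} (hα1 : α < 1) (ht : 0 ≤ t) {g : ℝ → ℝ}
    (hg : AEStronglyMeasurable g (volume.restrict (Ι (0:ℝ) t)))
    (hbd : ∀ τ ∈ Ioc (0:ℝ) t, |g τ| ≤ C) :
    IntervalIntegrable (fun τ => g τ * (t - τ) ^ (-α)) volume 0 t := by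
  have hk := kint hα1 t
  have hCk : IntervalIntegrable (fun τ => C * (t - τ) ^ (-α)) volume 0 t := hk.const_mul C
  apply hCk.mono_fun (hg.mul hk.def'.aestronglyMeasurable)
  rw [uIoc_of_le ht]
  filter_upwards [ae_restrict_mem measurableSet_Ioc] with τ hτ
  have h1 : (0:ℝ) ≤ (t - τ) ^ (-α) := Real.rpow_nonneg (by linarith [hτ.2]) _
  have h2 : (0:ℝ) ≤ C := le_trans (abs_nonneg _) (hbd τ hτ)
  simp only [Pi.mul_apply, Real.norm_eq_abs, abs_mul, abs_of_nonneg h1, abs_of_nonneg h2]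
  exact mul_le_mul_of_nonneg_right (hbd τ hτ) h1

/-- Key positivity lemma: if `G ≥ 0` is `C¹` on `[0,t]` with `G t = 0`, then
`∫_0^t (-G' τ) (t-τ)^{-α} dτ ≥ 0`. -/
lemma key_nonneg_s6 {α t : ℝ} (hα0 : 0 < α) (hα1 : α < 1) (ht : 0 < t)
    {G G' : ℝ → ℝ} (hG : ∀ τ ∈ Icc (0:ℝ) t, HasDerivAt G (G' τ) τ)
    (hG'c : ContinuousOn G' (Icc 0 t))
    (hGnn : ∀ τ ∈ Icc (0:ℝ) t, 0 ≤ G τ) (hGt : G t = 0) :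
    0 ≤ ∫ τ in (0:ℝ)..t, (-G' τ) * (t - τ) ^ (-α) := by
  obtain ⟨M, hM⟩ := (isCompact_Icc : IsCompact (Icc (0:ℝ) t)).exists_bound_of_continuousOn hG'c
  have hM0 : 0 ≤ M := le_trans (norm_nonneg _) (hM 0 ⟨le_refl _, ht.le⟩)
  -- bound on G
  have hGbd : ∀ s ∈ Icc (0:ℝ) t, G s ≤ M * (t - s) := by
    intro s hs
    have hsub : Icc s t ⊆ Icc 0 t := Icc_subset_Icc hs.1 le_rfl
    have hftc : ∫ τ in s..t, G' τ = G t - G s :=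
      intervalIntegral.integral_eq_sub_of_hasDerivAt
        (fun τ hτ => hG τ (hsub ((uIcc_of_le hs.2) ▸ hτ)))
        ((hG'c.mono hsub).intervalIntegrable_of_Icc hs.2)
    have hb : ‖∫ τ in s..t, G' τ‖ ≤ M * |t - s| :=
      intervalIntegral.norm_integral_le_of_norm_le_const (fun τ hτ => by
        refine hM τ (hsub ?_)
        exact Ioc_subset_Icc_self ((uIoc_of_le hs.2) ▸ hτ))
    rw [hftc, hGt, zero_sub, Real.norm_eq_abs, abs_neg] at hb
    have := neg_le_of_abs_le hb
    have habs : |t - s| = t - s := abs_of_nonneg (by linarith [hs.2])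
    rw [habs] at hb
    nlinarith [le_abs_self (G s), neg_abs_le (G s), abs_nonneg (G s),
      le_of_abs_le hb]
  -- integrability of the full integrand
  have hint : IntervalIntegrable (fun τ => (-G' τ) * (t - τ) ^ (-α)) volume 0 t := by
    refine bdd_mul_kint hα1 ht.le ?_ (fun τ hτ => by
      rw [abs_neg]; exact hM τ (Ioc_subset_Icc_self hτ))
    exact ((hG'c.neg).mono (by rw [uIoc_of_le ht.le]; exact Ioc_subset_Icc_self)).aestronglyMeasurable
      measurableSet_uIoc
  -- the primitive
  set f : ℝ → ℝ := fun s => ∫ τ in (0:ℝ)..s, (-G' τ) * (t - τ) ^ (-α) with hf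
  have hfc : ContinuousOn f (Icc 0 t) := by
    rw [← uIcc_of_le ht.le]
    exact intervalIntegral.continuousOn_primitive_interval' hint left_mem_uIcc
  -- lower bound on f s for s ∈ Ico 0 t
  have hlow : ∀ s ∈ Ico (0:ℝ) t, -(M * (t - s) ^ (1 - α)) ≤ f s := by
    intro s hs
    have hst : t - s > 0 := by linarith [hs.2]
    have hsub : Icc (0:ℝ) s ⊆ Icc 0 t := Icc_subset_Icc le_rfl hs.2.le
    -- derivative of the kernel on [0,s]
    have hkd : ∀ τ ∈ uIcc (0:ℝ) s, HasDerivAt (fun τ => (t - τ) ^ (-α))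
        (α * (t - τ) ^ (-α - 1)) τ := by
      intro τ hτ
      rw [uIcc_of_le hs.1] at hτ
      have hτt : t - τ > 0 := by linarith [hτ.2, hs.2]
      have h1 : HasDerivAt (fun τ : ℝ => t - τ) (-1) τ := by
        simpa using (hasDerivAt_id τ).const_sub t
      have := h1.rpow_const (p := -α) (Or.inl hτt.ne')
      convert this using 1
      ring
    have hGd : ∀ τ ∈ uIcc (0:ℝ) s, HasDerivAt G (G' τ) τ := by
      intro τ hτ; exact hG τ (hsub ((uIcc_of_le hs.1) ▸ hτ))
    have hG'int : IntervalIntegrable G' volume 0 s :=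
      (hG'c.mono hsub).intervalIntegrable_of_Icc hs.1
    have hkdint : IntervalIntegrable (fun τ => α * (t - τ) ^ (-α - 1)) volume 0 s := by
      apply ContinuousOn.intervalIntegrable_of_Icc hs.1
      refine continuousOn_const.mul ?_
      intro τ hτ
      have hτt : t - τ ≠ 0 := by have := hτ.2; intro h; simp [Icc] at hτ; nlinarith [hs.2]
      exact ((continuousAt_const.sub continuousAt_id).rpow_const
        (Or.inl hτt)).continuousWithinAt
    -- integration by parts: ∫_0^s k τ * G' τ = k s * G s - k 0 * G 0 - ∫_0^s k' τ * G τ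
    have hibp := intervalIntegral.integral_mul_deriv_eq_deriv_mul hkd hGd hkdint hG'int
    -- f s = -(∫_0^s k * G')
    have hfs : f s = -(∫ τ in (0:ℝ)..s, (t - τ) ^ (-α) * G' τ) := by
      simp only [hf, ← intervalIntegral.integral_neg]
      congr 1; funext τ; ring
    have hpos : 0 ≤ ∫ τ in (0:ℝ)..s, α * (t - τ) ^ (-α - 1) * G τ := by
      apply intervalIntegral.integral_nonneg hs.1
      intro τ hτ
      have hτt : (0:ℝ) ≤ t - τ := by linarith [hτ.2, hs.2]
      have := hGnn τ (hsub hτ)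
      positivity
    have hGs := hGbd s (Ico_subset_Icc_self hs)
    have hG0 := hGnn 0 ⟨le_refl _, ht.le⟩
    have hks : (0:ℝ) ≤ (t - s) ^ (-α) := Real.rpow_nonneg hst.le _
    have hk0 : (0:ℝ) ≤ (t - 0) ^ (-α) := Real.rpow_nonneg (by linarith) _
    rw [hfs, hibp]
    have h1 : (t - s) ^ (-α) * G s ≤ (t - s) ^ (-α) * (M * (t - s)) :=
      mul_le_mul_of_nonneg_left hGs hks
    have h2 : (t - s) ^ (-α) * (M * (t - s)) = M * (t - s) ^ (1 - α) := by
      rw [show (1:ℝ) - α = -α + 1 by ring, Real.rpow_add hst, Real.rpow_one]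
      ring
    nlinarith [mul_nonneg hk0 hG0]
  -- take the limit s → t⁻
  have hne : (𝓝[Ico (0:ℝ) t] t).NeBot := right_nhdsWithin_Ico_neBot ht
  have htend_f : Tendsto f (𝓝[Ico (0:ℝ) t] t) (𝓝 (f t)) :=
    (hfc t ⟨ht.le, le_refl _⟩).mono_left (nhdsWithin_mono _ Ico_subset_Icc_self)
  have htend_g : Tendsto (fun s => -(M * (t - s) ^ ((1:ℝ) - α))) (𝓝[Ico (0:ℝ) t] t)
      (𝓝 0) := by
    have h1 : ContinuousAt (fun y : ℝ => y ^ ((1:ℝ) - α)) 0 :=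
      Real.continuousAt_rpow_const 0 _ (Or.inr (by linarith))
    have h2 : Tendsto (fun s : ℝ => t - s) (𝓝 t) (𝓝 (t - t)) :=
      tendsto_const_nhds.sub tendsto_id
    rw [sub_self] at h2
    have h3 : Tendsto (fun s : ℝ => (t - s) ^ ((1:ℝ) - α)) (𝓝 t) (𝓝 0) := by
      have := h1.tendsto.comp h2
      simpa [Function.comp_def, Real.zero_rpow (by linarith : (1:ℝ) - α ≠ 0)] using this
    have : Tendsto (fun s : ℝ => -(M * (t - s) ^ ((1:ℝ) - α))) (𝓝 t) (𝓝 (-(M * 0))) :=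
      ((tendsto_const_nhds.mul h3)).neg
    simpa using this.mono_left nhdsWithin_le_nhds
  have : 0 ≤ f t := by
    refine le_of_tendsto_of_tendsto htend_g htend_f ?_
    filter_upwards [self_mem_nhdsWithin] with s hs using hlow s hs
  exact this

/-- Pointwise (in `x`) inequality: `∫_0^t v(τ)v'(τ)k ≤ v(t) ∫_0^t v'(τ)k`. -/
lemma pointwise_ineq {α t : ℝ} (hα0 : 0 < α) (hα1 : α < 1) (ht : 0 < t)
    {v w : ℝ → ℝ} (hv : ∀ τ ∈ Icc (0:ℝ) t, HasDerivAt v (w τ) τ)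
    (hw : ContinuousOn w (Icc 0 t)) :
    (∫ τ in (0:ℝ)..t, v τ * w τ * (t - τ) ^ (-α))
      ≤ ∫ τ in (0:ℝ)..t, v t * w τ * (t - τ) ^ (-α) := by
  have hvc : ContinuousOn v (Icc 0 t) := fun s hs =>
    (hv s hs).continuousAt.continuousWithinAt
  set G : ℝ → ℝ := fun s => (v t - v s) ^ 2 / 2 with hGdef
  set G' : ℝ → ℝ := fun s => -((v t - v s) * w s) with hG'def
  have hG : ∀ τ ∈ Icc (0:ℝ) t, HasDerivAt G (G' τ) τ := by
    intro τ hτ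
    have h1 : HasDerivAt (fun s => v t - v s) (-w τ) τ := by
      simpa using (hv τ hτ).const_sub (v t)
    have h2 := (h1.fun_pow 2).div_const 2
    refine h2.congr_deriv ?_
    simp [hG'def]; ring
  have hG'c : ContinuousOn G' (Icc 0 t) :=
    ((continuousOn_const.sub hvc).mul hw).neg
  have hkey := key_nonneg_s6 hα0 hα1 ht hG hG'c
    (fun τ _ => by positivity) (by simp [hGdef])
  have heq : (∫ τ in (0:ℝ)..t, (-G' τ) * (t - τ) ^ (-α))
      = ∫ τ in (0:ℝ)..t, (v t - v τ) * w τ * (t - τ) ^ (-α) := by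
    congr 1; funext τ; simp only [hG'def, neg_neg]
  rw [heq] at hkey
  -- split the integral
  have hmeas : ∀ c : ℝ → ℝ, ContinuousOn c (Icc 0 t) →
      AEStronglyMeasurable c (volume.restrict (Ι (0:ℝ) t)) := by
    intro c hc
    rw [uIoc_of_le ht.le]
    exact (hc.mono Ioc_subset_Icc_self).aestronglyMeasurable measurableSet_Ioc
  obtain ⟨M, hM⟩ := (isCompact_Icc : IsCompact (Icc (0:ℝ) t)).exists_bound_of_continuousOn
    ((continuousOn_const.sub hvc).mul hw)
  obtain ⟨M', hM'⟩ := (isCompact_Icc : IsCompact (Icc (0:ℝ) t)).exists_bound_of_continuousOn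
    (hvc.mul hw)
  have hint1 : IntervalIntegrable (fun τ => (v t - v τ) * w τ * (t - τ) ^ (-α)) volume 0 t :=
    bdd_mul_kint hα1 ht.le (hmeas _ ((continuousOn_const.sub hvc).mul hw))
      (fun τ hτ => hM τ (Ioc_subset_Icc_self hτ))
  have hint2 : IntervalIntegrable (fun τ => v τ * w τ * (t - τ) ^ (-α)) volume 0 t :=
    bdd_mul_kint hα1 ht.le (hmeas _ (hvc.mul hw))
      (fun τ hτ => hM' τ (Ioc_subset_Icc_self hτ))
  have hsplit : (∫ τ in (0:ℝ)..t, (v t - v τ) * w τ * (t - τ) ^ (-α))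
      = (∫ τ in (0:ℝ)..t, v t * w τ * (t - τ) ^ (-α))
        - ∫ τ in (0:ℝ)..t, v τ * w τ * (t - τ) ^ (-α) := by
    have h3 : IntervalIntegrable (fun τ => v t * w τ * (t - τ) ^ (-α)) volume 0 t := by
      have := hint1.add hint2
      have heq2 : (fun x => (v t - v x) * w x * (t - x) ^ (-α) + v x * w x * (t - x) ^ (-α))
          = fun τ => v t * w τ * (t - τ) ^ (-α) := by funext τ; ring
      rwa [heq2] at this
    rw [← intervalIntegral.integral_sub h3 hint2]
    congr 1; funext τ; ring
  linarith [hsplit ▸ hkey]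

lemma prod_int_kernel {α t l C : ℝ} (hα1 : α < 1) (ht : 0 < t)
    {g : ℝ × ℝ → ℝ}
    (hg : AEStronglyMeasurable g
      ((volume.restrict (Ioc 0 l)).prod (volume.restrict (Ioc 0 t))))
    (hbd : ∀ p ∈ Ioc (0:ℝ) l ×ˢ Ioc (0:ℝ) t, |g p| ≤ C) :
    Integrable (fun p : ℝ × ℝ => g p * (t - p.2) ^ (-α))
      ((volume.restrict (Ioc 0 l)).prod (volume.restrict (Ioc 0 t))) := by
  have hkernel : Integrable (fun τ : ℝ => (t - τ) ^ (-α)) (volume.restrict (Ioc 0 t)) := by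
    have h := (kint hα1 t)
    rw [intervalIntegrable_iff, uIoc_of_le ht.le] at h
    exact h
  have hconst : Integrable (fun _ : ℝ => C) (volume.restrict (Ioc 0 l)) := by
    have : IntegrableOn (fun _ : ℝ => C) (Ioc 0 l) volume :=
      integrableOn_const measure_Ioc_lt_top.ne
    exact this
  have hCk : Integrable (fun p : ℝ × ℝ => C * (t - p.2) ^ (-α))
      ((volume.restrict (Ioc 0 l)).prod (volume.restrict (Ioc 0 t))) :=
    hconst.mul_prod hkernel
  have hkmeas : AEStronglyMeasurable (fun p : ℝ × ℝ => (t - p.2) ^ (-α))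
      ((volume.restrict (Ioc 0 l)).prod (volume.restrict (Ioc 0 t))) :=
    ((measurable_const.sub measurable_snd).pow measurable_const).aestronglyMeasurable
  refine hCk.mono' (hg.mul hkmeas) ?_
  rw [Measure.prod_restrict]
  filter_upwards [ae_restrict_mem (measurableSet_Ioc.prod measurableSet_Ioc)] with p hp
  have hk0 : (0:ℝ) ≤ (t - p.2) ^ (-α) := Real.rpow_nonneg (by linarith [hp.2.2]) _
  have hC0 : 0 ≤ C := le_trans (abs_nonneg _) (hbd p hp)
  rw [Real.norm_eq_abs, abs_mul, abs_of_nonneg hk0]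
  exact mul_le_mul_of_nonneg_right (hbd p hp) hk0

lemma integral_congr_Ioo {t : ℝ} (ht : 0 ≤ t) {f g : ℝ → ℝ}
    (h : ∀ τ ∈ Ioo (0:ℝ) t, f τ = g τ) :
    ∫ τ in (0:ℝ)..t, f τ = ∫ τ in (0:ℝ)..t, g τ := by
  rw [integral_of_le ht, integral_of_le ht, integral_Ioc_eq_integral_Ioo,
    integral_Ioc_eq_integral_Ioo]
  exact setIntegral_congr_fun measurableSet_Ioo h


end Aux

/-- For `u` continuous on `[0,l]×[0,T]` with continuous `∂u/∂t`, such that each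
`t ↦ u(x,t)` is absolutely continuous, one has
`∫_0^l u(x,t) ∂_{0t}^α u(x,t) dx ≥ (1/2) ∂_{0t}^α (∫_0^l u(x,t)² dx)`
for all `t ∈ (0,T]`. -/
theorem integral_mul_caputo_ge
    (α l T : ℝ) (hα0 : 0 < α) (hα1 : α < 1) (hl : 0 < l) (hT : 0 < T)
    (u : ℝ → ℝ → ℝ)
    (hu : ContinuousOn (fun p : ℝ × ℝ => u p.1 p.2) (Set.Icc 0 l ×ˢ Set.Icc 0 T))
    (hut_diff : ∀ x ∈ Set.Icc (0:ℝ) l, ∀ t ∈ Set.Icc (0:ℝ) T, DifferentiableAt ℝ (u x) t)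
    (hut_cont : ContinuousOn (fun p : ℝ × ℝ => deriv (u p.1) p.2)
      (Set.Icc 0 l ×ˢ Set.Icc 0 T))
    (hac : ∀ x ∈ Set.Icc (0:ℝ) l, AbsContinuousOn (u x) 0 T) :
    ∀ t ∈ Set.Ioc (0:ℝ) T,
      (∫ x in (0:ℝ)..l, u x t * caputo α (u x) t)
        ≥ (1 / 2) * caputo α (fun s => ∫ x in (0:ℝ)..l, (u x s) ^ 2) t := by
  clear hac
  open intervalIntegral Filter Topology in

  intro t ht
  obtain ⟨ht0, htT⟩ := ht
  have hC : 0 < 1 / Real.Gamma (1 - α) := by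
    have := Real.Gamma_pos_of_pos (by linarith : (0:ℝ) < 1 - α)
    positivity
  have hsubT : Icc (0:ℝ) t ⊆ Icc 0 T := Icc_subset_Icc le_rfl htT
  set w : ℝ → ℝ → ℝ := fun x τ => deriv (u x) τ with hwdef
  -- bounds
  obtain ⟨M₁, hM₁⟩ := (isCompact_Icc.prod isCompact_Icc).exists_bound_of_continuousOn hu
  obtain ⟨M₂, hM₂⟩ := (isCompact_Icc.prod isCompact_Icc).exists_bound_of_continuousOn hut_cont
  have hmem00 : ((0:ℝ), (0:ℝ)) ∈ Icc (0:ℝ) l ×ˢ Icc (0:ℝ) T :=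
    ⟨⟨le_rfl, hl.le⟩, ⟨le_rfl, hT.le⟩⟩
  have hM₁0 : 0 ≤ M₁ := le_trans (norm_nonneg _) (hM₁ _ hmem00)
  have hM₂0 : 0 ≤ M₂ := le_trans (norm_nonneg _) (hM₂ _ hmem00)
  -- slice continuity
  have hu_x : ∀ x ∈ Icc (0:ℝ) l, ContinuousOn (u x) (Icc 0 T) := fun x hx =>
    hu.comp (Continuous.continuousOn (by fun_prop)) (fun τ hτ => mk_mem_prod hx hτ)
  have hw_x : ∀ x ∈ Icc (0:ℝ) l, ContinuousOn (w x) (Icc 0 T) := fun x hx =>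
    hut_cont.comp (Continuous.continuousOn (by fun_prop)) (fun τ hτ => mk_mem_prod hx hτ)
  have hu_t : ∀ τ ∈ Icc (0:ℝ) T, ContinuousOn (fun x => u x τ) (Icc 0 l) := fun τ hτ =>
    hu.comp (Continuous.continuousOn (by fun_prop)) (fun x hx => mk_mem_prod hx hτ)
  have hw_t : ∀ τ ∈ Icc (0:ℝ) T, ContinuousOn (fun x => w x τ) (Icc 0 l) := fun τ hτ =>
    hut_cont.comp (Continuous.continuousOn (by fun_prop)) (fun x hx => mk_mem_prod hx hτ)
  have hderiv : ∀ x ∈ Icc (0:ℝ) l, ∀ τ ∈ Icc (0:ℝ) T, HasDerivAt (u x) (w x τ) τ :=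
    fun x hx τ hτ => (hut_diff x hx τ hτ).hasDerivAt
  have hsubbox : Ioc (0:ℝ) l ×ˢ Ioc (0:ℝ) t ⊆ Icc (0:ℝ) l ×ˢ Icc (0:ℝ) T :=
    prod_mono Ioc_subset_Icc_self (Ioc_subset_Icc_self.trans hsubT)
  -- product integrability
  have hΨ : Integrable (fun p : ℝ × ℝ => u p.1 p.2 * w p.1 p.2 * (t - p.2) ^ (-α))
      ((volume.restrict (Ioc 0 l)).prod (volume.restrict (Ioc 0 t))) := by
    refine prod_int_kernel (C := M₁ * M₂) hα1 ht0 ?_ ?_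
    · rw [Measure.prod_restrict]
      exact ((hu.mul hut_cont).mono hsubbox).aestronglyMeasurable
        (measurableSet_Ioc.prod measurableSet_Ioc)
    · intro p hp
      have h1 := hM₁ p (hsubbox hp)
      have h2 := hM₂ p (hsubbox hp)
      rw [Real.norm_eq_abs] at h1 h2
      rw [abs_mul]
      exact mul_le_mul h1 h2 (abs_nonneg _) hM₁0
  have hΨ' : Integrable (fun p : ℝ × ℝ => u p.1 t * w p.1 p.2 * (t - p.2) ^ (-α))
      ((volume.restrict (Ioc 0 l)).prod (volume.restrict (Ioc 0 t))) := by
    refine prod_int_kernel (C := M₁ * M₂) hα1 ht0 ?_ ?_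
    · rw [Measure.prod_restrict]
      refine ContinuousOn.aestronglyMeasurable ?_ (measurableSet_Ioc.prod measurableSet_Ioc)
      refine ContinuousOn.mul ?_ (hut_cont.mono hsubbox)
      refine (hu.comp (Continuous.continuousOn (by fun_prop : Continuous
        (fun p : ℝ × ℝ => (p.1, t)))) ?_).mono hsubbox
      exact fun p hp => mk_mem_prod hp.1 ⟨ht0.le, htT⟩
    · intro p hp
      have h1 := hM₁ (p.1, t) (mk_mem_prod (hsubbox hp).1 ⟨ht0.le, htT⟩)
      have h2 := hM₂ p (hsubbox hp)
      rw [Real.norm_eq_abs] at h1 h2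
      rw [abs_mul]
      exact mul_le_mul h1 h2 (abs_nonneg _) hM₁0
  -- A and B
  set B : ℝ → ℝ := fun x => ∫ τ in (0:ℝ)..t, u x τ * w x τ * (t - τ) ^ (-α) with hBdef
  set A : ℝ → ℝ := fun x => ∫ τ in (0:ℝ)..t, u x t * w x τ * (t - τ) ^ (-α) with hAdef
  have hBeq : B = fun x => ∫ τ in Ioc (0:ℝ) t, u x τ * w x τ * (t - τ) ^ (-α) :=
    funext fun x => integral_of_le ht0.le
  have hAeq : A = fun x => ∫ τ in Ioc (0:ℝ) t, u x t * w x τ * (t - τ) ^ (-α) :=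
    funext fun x => integral_of_le ht0.le
  have hBint : IntervalIntegrable B volume 0 l := by
    rw [intervalIntegrable_iff, uIoc_of_le hl.le, hBeq]
    exact (by simpa [IntegrableOn] using hΨ.integral_prod_left : IntegrableOn
      (fun x => ∫ τ in Ioc (0:ℝ) t, u x τ * w x τ * (t - τ) ^ (-α)) (Ioc 0 l) volume)
  have hAint : IntervalIntegrable A volume 0 l := by
    rw [intervalIntegrable_iff, uIoc_of_le hl.le, hAeq]
    exact (by simpa [IntegrableOn] using hΨ'.integral_prod_left : IntegrableOn
      (fun x => ∫ τ in Ioc (0:ℝ) t, u x t * w x τ * (t - τ) ^ (-α)) (Ioc 0 l) volume)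
  -- derivative of V under the integral sign
  have hVd : ∀ τ ∈ Ioo (0:ℝ) t, HasDerivAt (fun s => ∫ x in (0:ℝ)..l, (u x s) ^ 2)
      (∫ x in (0:ℝ)..l, 2 * u x τ * w x τ) τ := by
    intro τ hτ
    have hτT : τ ∈ Ioo (0:ℝ) T := ⟨hτ.1, lt_of_lt_of_le hτ.2 htT⟩
    have hε0 : 0 < min τ (T - τ) := lt_min hτ.1 (by linarith [hτT.2])
    have hball : Metric.ball τ (min τ (T - τ)) ⊆ Icc 0 T := by
      intro s hs
      rw [Metric.mem_ball, Real.dist_eq] at hs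
      have h1 := abs_lt.1 hs
      have h2 := min_le_left τ (T - τ)
      have h3 := min_le_right τ (T - τ)
      constructor <;> nlinarith
    have key := intervalIntegral.hasDerivAt_integral_of_dominated_loc_of_deriv_le
      (F := fun s x => (u x s) ^ 2) (F' := fun s x => 2 * u x s * w x s)
      (a := 0) (b := l) (μ := volume) (x₀ := τ) (bound := fun _ => 2 * (M₁ * M₂))
      (Metric.ball_mem_nhds τ hε0) ?_ ?_ ?_ ?_ ?_ ?_
    · exact key.2
    · filter_upwards [isOpen_Ioo.mem_nhds hτT] with s hs
      rw [uIoc_of_le hl.le]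
      exact (((hu_t s (Ioo_subset_Icc_self hs)).mono Ioc_subset_Icc_self).pow 2).aestronglyMeasurable
        measurableSet_Ioc
    · exact ((hu_t τ (Ioo_subset_Icc_self hτT)).pow 2).intervalIntegrable_of_Icc hl.le
    · rw [uIoc_of_le hl.le]
      exact (((continuousOn_const.mul (hu_t τ (Ioo_subset_Icc_self hτT))).mul
        (hw_t τ (Ioo_subset_Icc_self hτT))).mono Ioc_subset_Icc_self).aestronglyMeasurable
        measurableSet_Ioc
    · refine ae_of_all _ ?_
      intro x hx s hs
      have hx' : x ∈ Icc (0:ℝ) l := Ioc_subset_Icc_self ((uIoc_of_le hl.le) ▸ hx)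
      have hs' := hball hs
      have h1 : |u x s| ≤ M₁ := by simpa using hM₁ (x, s) (mk_mem_prod hx' hs')
      have h2 : |w x s| ≤ M₂ := by simpa using hM₂ (x, s) (mk_mem_prod hx' hs')
      show ‖2 * u x s * w x s‖ ≤ 2 * (M₁ * M₂)
      rw [Real.norm_eq_abs, abs_mul, abs_mul, abs_two]
      have h3 := mul_le_mul h1 h2 (abs_nonneg _) hM₁0
      nlinarith [abs_nonneg (u x s), abs_nonneg (w x s)]
    · exact intervalIntegrable_const
    · refine ae_of_all _ ?_
      intro x hx s hs
      have hx' : x ∈ Icc (0:ℝ) l := Ioc_subset_Icc_self ((uIoc_of_le hl.le) ▸ hx)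
      have h := (hderiv x hx' s (hball hs)).fun_pow 2
      refine h.congr_deriv ?_
      push_cast
      ring
  -- rewrite RHS
  have hRHS : (1 / 2) * caputo α (fun s => ∫ x in (0:ℝ)..l, (u x s) ^ 2) t
      = ∫ x in (0:ℝ)..l, (1 / Real.Gamma (1 - α)) * B x := by
    rw [caputo]
    have h1 : (∫ τ in (0:ℝ)..t, deriv (fun s => ∫ x in (0:ℝ)..l, (u x s) ^ 2) τ * (t - τ) ^ (-α))
        = ∫ τ in (0:ℝ)..t, 2 * ∫ x in (0:ℝ)..l, u x τ * w x τ * (t - τ) ^ (-α) := by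
      apply integral_congr_Ioo ht0.le
      intro τ hτ
      rw [(hVd τ hτ).deriv, ← intervalIntegral.integral_mul_const,
        ← intervalIntegral.integral_const_mul]
      apply intervalIntegral.integral_congr
      intro x _
      ring
    rw [h1, intervalIntegral.integral_const_mul]
    -- Fubini (2 pulled out)
    have h2 : (∫ τ in (0:ℝ)..t, ∫ x in (0:ℝ)..l, u x τ * w x τ * (t - τ) ^ (-α))
        = ∫ x in (0:ℝ)..l, B x := by
      rw [hBeq]
      have hswap : (∫ x in Ioc (0:ℝ) l, ∫ τ in Ioc (0:ℝ) t,
            u x τ * w x τ * (t - τ) ^ (-α))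
          = ∫ τ in Ioc (0:ℝ) t, ∫ x in Ioc (0:ℝ) l, u x τ * w x τ * (t - τ) ^ (-α) :=
        MeasureTheory.integral_integral_swap (by exact hΨ)
      simp_rw [intervalIntegral.integral_of_le hl.le, intervalIntegral.integral_of_le ht0.le]
      exact hswap.symm
    rw [h2, intervalIntegral.integral_const_mul]
    ring
  -- rewrite LHS
  have hLHS : (∫ x in (0:ℝ)..l, u x t * caputo α (u x) t)
      = ∫ x in (0:ℝ)..l, (1 / Real.Gamma (1 - α)) * A x := by
    apply intervalIntegral.integral_congr
    intro x _
    show u x t * caputo α (u x) t = (1 / Real.Gamma (1 - α)) * A x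
    rw [caputo]
    have h3 : A x = u x t * ∫ τ in (0:ℝ)..t, w x τ * (t - τ) ^ (-α) := by
      rw [hAdef, ← intervalIntegral.integral_const_mul]
      apply intervalIntegral.integral_congr
      intro τ _
      ring
    rw [h3]
    ring
  -- final comparison
  rw [ge_iff_le, hRHS, hLHS]
  refine intervalIntegral.integral_mono_on hl.le (hBint.const_mul _) (hAint.const_mul _) ?_
  intro x hx
  refine mul_le_mul_of_nonneg_left ?_ hC.le
  exact pointwise_ineq hα0 hα1 ht0
    (fun τ hτ => hderiv x hx τ (hsubT hτ)) ((hw_x x hx).mono hsubT)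
end

section
/- Let l > 0 and let u : [0,l] → ℝ be continuously differentiable. Then for every ε > 0, both u(0)² and u(l)² are bounded by ε ∫_0^l u′(x)² dx + (1/ε + 1/l) ∫_0^l u(x)² dx. -/
open MeasureTheory Set

/-- Trace-type inequality: for a continuously differentiable `u` on `[0,l]` and any
`ε > 0`, both `u(0)²` and `u(l)²` are bounded by
`ε ∫_0^l u'(x)² dx + (1/ε + 1/l) ∫_0^l u(x)² dx`. -/
theorem trace_inequality
    (l : ℝ) (hl : 0 < l) (u : ℝ → ℝ)
    (hdiff : ∀ x ∈ Set.Icc (0:ℝ) l, DifferentiableAt ℝ u x)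
    (hderiv_cont : ContinuousOn (deriv u) (Set.Icc 0 l)) :
    ∀ ε > (0:ℝ),
      (u 0) ^ 2 ≤ ε * (∫ x in (0:ℝ)..l, (deriv u x) ^ 2)
          + (1 / ε + 1 / l) * ∫ x in (0:ℝ)..l, (u x) ^ 2
      ∧ (u l) ^ 2 ≤ ε * (∫ x in (0:ℝ)..l, (deriv u x) ^ 2)
          + (1 / ε + 1 / l) * ∫ x in (0:ℝ)..l, (u x) ^ 2 := by
  intro ε hε
  have hu_cont : ContinuousOn u (Icc 0 l) :=
    fun x hx => (hdiff x hx).continuousAt.continuousWithinAt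
  have hg_cont : ContinuousOn (fun x => 2 * u x * deriv u x) (Icc 0 l) :=
    (continuousOn_const.mul hu_cont).mul hderiv_cont
  have hbound_cont : ContinuousOn (fun x => ε * (deriv u x) ^ 2 + (1/ε) * (u x) ^ 2) (Icc 0 l) :=
    (continuousOn_const.mul (hderiv_cont.pow 2)).add (continuousOn_const.mul (hu_cont.pow 2))
  obtain ⟨y, hy, hmin⟩ := (isCompact_Icc : IsCompact (Icc (0:ℝ) l)).exists_isMinOn
      (nonempty_Icc.2 hl.le) (hu_cont.pow 2)
  have hu2_int : IntervalIntegrable (fun x => (u x) ^ 2) volume 0 l :=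
    ((hu_cont.pow 2).mono (by rw [uIcc_of_le hl.le])).intervalIntegrable
  have havg : u y ^ 2 * l ≤ ∫ x in (0:ℝ)..l, (u x) ^ 2 := by
    have h := intervalIntegral.integral_mono_on hl.le intervalIntegrable_const hu2_int
      (fun x hx => hmin hx)
    simpa [mul_comm] using h
  have hftc : ∀ a b : ℝ, a ∈ Icc (0:ℝ) l → b ∈ Icc (0:ℝ) l → a ≤ b →
      u b ^ 2 - u a ^ 2 = ∫ x in a..b, 2 * u x * deriv u x := by
    intro a b ha hb hab
    have hsub' : uIcc a b ⊆ Icc 0 l := by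
      rw [uIcc_of_le hab]; exact Icc_subset_Icc ha.1 hb.2
    have h := intervalIntegral.integral_eq_sub_of_hasDerivAt
      (f := fun x => u x ^ 2) (f' := fun x => 2 * u x * deriv u x)
      (fun x hx => by simpa [pow_one] using ((hdiff x (hsub' hx)).hasDerivAt).fun_pow 2)
      ((hg_cont.mono hsub').intervalIntegrable)
    exact h.symm
  have hg_int : IntervalIntegrable (fun x => 2 * u x * deriv u x) volume 0 l :=
    (hg_cont.mono (by rw [uIcc_of_le hl.le])).intervalIntegrable
  have habs_int : IntervalIntegrable (fun x => |2 * u x * deriv u x|) volume 0 l := hg_int.abs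
  have hbound_int : IntervalIntegrable (fun x => ε * (deriv u x) ^ 2 + (1/ε) * (u x) ^ 2)
      volume 0 l :=
    (hbound_cont.mono (by rw [uIcc_of_le hl.le])).intervalIntegrable
  have hd2_int : IntervalIntegrable (fun x => (deriv u x) ^ 2) volume 0 l :=
    ((hderiv_cont.pow 2).mono (by rw [uIcc_of_le hl.le])).intervalIntegrable
  have hC : ∫ x in (0:ℝ)..l, |2 * u x * deriv u x|
      ≤ ε * (∫ x in (0:ℝ)..l, (deriv u x) ^ 2) + (1/ε) * ∫ x in (0:ℝ)..l, (u x) ^ 2 := by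
    have h1 : ∫ x in (0:ℝ)..l, |2 * u x * deriv u x|
        ≤ ∫ x in (0:ℝ)..l, (ε * (deriv u x) ^ 2 + (1/ε) * (u x) ^ 2) := by
      refine intervalIntegral.integral_mono_on hl.le habs_int hbound_int (fun x hx => ?_)
      rw [abs_le]
      constructor <;>
        nlinarith [sq_nonneg (ε * deriv u x - u x), sq_nonneg (ε * deriv u x + u x), hε, mul_one_div_cancel hε.ne', mul_pos hε hε]
    calc _ ≤ _ := h1
      _ = _ := by
        rw [intervalIntegral.integral_add (hd2_int.const_mul ε) (hu2_int.const_mul (1/ε)),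
          intervalIntegral.integral_const_mul, intervalIntegral.integral_const_mul]
  -- bound on any subinterval integral of g, in absolute value
  have hsubint : ∀ a b : ℝ, a ∈ Icc (0:ℝ) l → b ∈ Icc (0:ℝ) l → a ≤ b →
      |∫ x in a..b, 2 * u x * deriv u x|
        ≤ ε * (∫ x in (0:ℝ)..l, (deriv u x) ^ 2) + (1/ε) * ∫ x in (0:ℝ)..l, (u x) ^ 2 := by
    intro a b ha hb hab
    have hsub' : uIcc a b ⊆ Icc 0 l := by
      rw [uIcc_of_le hab]; exact Icc_subset_Icc ha.1 hb.2
    have h2 : |∫ x in a..b, 2 * u x * deriv u x| ≤ ∫ x in a..b, |2 * u x * deriv u x| :=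
      intervalIntegral.abs_integral_le_integral_abs hab
    have h3 : ∫ x in a..b, |2 * u x * deriv u x| ≤ ∫ x in (0:ℝ)..l, |2 * u x * deriv u x| := by
      refine intervalIntegral.integral_mono_interval ha.1 hab hb.2 ?_ habs_int
      filter_upwards with x using abs_nonneg _
    linarith
  have hy2 : u y ^ 2 ≤ (1 / l) * ∫ x in (0:ℝ)..l, (u x) ^ 2 := by
    rw [div_mul_eq_mul_div, le_div_iff₀ hl]
    linarith
  constructor
  · have h0 := hftc 0 y (by simp [hl.le]) hy hy.1
    have hb := hsubint 0 y (by simp [hl.le]) hy hy.1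
    have : u 0 ^ 2 ≤ u y ^ 2 + |∫ x in (0:ℝ)..y, 2 * u x * deriv u x| := by
      have := abs_le.mp (le_refl |∫ x in (0:ℝ)..y, 2 * u x * deriv u x|) |>.1
      nlinarith [neg_abs_le (∫ x in (0:ℝ)..y, 2 * u x * deriv u x)]
    nlinarith
  · have h0 := hftc y l hy (by simp [hl.le]) hy.2
    have hb := hsubint y l hy (by simp [hl.le]) hy.2
    have : u l ^ 2 ≤ u y ^ 2 + |∫ x in y..l, 2 * u x * deriv u x| := by
      nlinarith [le_abs_self (∫ x in y..l, 2 * u x * deriv u x)]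
    nlinarith
end
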